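/- Let (H,R,χ) be a pre-Cartier quasitriangular bialgebra. Then R₁₂⁻¹χ₁₃R₁₂ = R₂₃⁻¹χ₁₃R₂₃ in H⊗H⊗H. -/

import Mathlib

open scoped TensorProduct

noncomputable section

variable (k H : Type*) [CommRing k] [Ring H] [Bialgebra k H]

/-- leg embedding `a ⊗ b ↦ a ⊗ b ⊗ 1` into `H ⊗ (H ⊗ H)`. -/
def leg12 : H ⊗[k] H →ₐ[k] H ⊗[k] (H ⊗[k] H) :=
  Algebra.TensorProduct.map (AlgHom.id k H) Algebra.TensorProduct.includeLeft

/-- leg embedding `a ⊗ b ↦ 1 ⊗ a ⊗ b`. -/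
def leg23 : H ⊗[k] H →ₐ[k] H ⊗[k] (H ⊗[k] H) :=
  Algebra.TensorProduct.includeRight

/-- leg embedding `a ⊗ b ↦ a ⊗ 1 ⊗ b`. -/
def leg13 : H ⊗[k] H →ₐ[k] H ⊗[k] (H ⊗[k] H) :=
  Algebra.TensorProduct.map (AlgHom.id k H) Algebra.TensorProduct.includeRight

/-- `(Id ⊗ Δ)` as an algebra map `H ⊗ H → H ⊗ (H ⊗ H)`. -/
def idComul : H ⊗[k] H →ₐ[k] H ⊗[k] (H ⊗[k] H) :=
  Algebra.TensorProduct.map (AlgHom.id k H) (Bialgebra.comulAlgHom k H)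

/-- `(Δ ⊗ Id)` as an algebra map `H ⊗ H → H ⊗ (H ⊗ H)` (after reassociation). -/
def comulId : H ⊗[k] H →ₐ[k] H ⊗[k] (H ⊗[k] H) :=
  (Algebra.TensorProduct.assoc k k k H H H).toAlgHom.comp
    (Algebra.TensorProduct.map (Bialgebra.comulAlgHom k H) (AlgHom.id k H))

/-- the flip `a ⊗ b ↦ b ⊗ a` as an algebra map. -/
def swapT : H ⊗[k] H →ₐ[k] H ⊗[k] H := (Algebra.TensorProduct.comm k H H).toAlgHom

/-- A quasitriangular structure on the bialgebra `H`. -/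
structure QT where
  R : H ⊗[k] H
  Rinv : H ⊗[k] H
  mul_inv : R * Rinv = 1
  inv_mul : Rinv * R = 1
  quasi_cocomm : ∀ h : H, swapT k H (Coalgebra.comul (R := k) h) * R = R * Coalgebra.comul (R := k) h
  hex1 : idComul k H R = leg13 k H R * leg12 k H R
  hex2 : comulId k H R = leg13 k H R * leg23 k H R

/-- A pre-Cartier quasitriangular bialgebra structure on `H`. -/
structure PreCartier extends QT k H where
  χ : H ⊗[k] H
  chi_comm : ∀ h : H, χ * Coalgebra.comul (R := k) h = Coalgebra.comul (R := k) h * χ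
  chi_hex1 : idComul k H χ = leg12 k H χ + leg12 k H Rinv * leg13 k H χ * leg12 k H R
  chi_hex2 : comulId k H χ = leg23 k H χ + leg23 k H Rinv * leg13 k H χ * leg23 k H R

/-- flip of the last two legs, as an algebra map. -/
def flip23 : H ⊗[k] (H ⊗[k] H) →ₐ[k] H ⊗[k] (H ⊗[k] H) :=
  Algebra.TensorProduct.map (AlgHom.id k H) (swapT k H)

lemma flip23_leg12 (z : H ⊗[k] H) : flip23 k H (leg12 k H z) = leg13 k H z := by
  induction z using TensorProduct.induction_on with
  | zero => simp
  | tmul a b => simp [flip23, leg12, leg13, swapT]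
  | add x y hx hy => simp [map_add, hx, hy]

lemma flip23_leg13 (z : H ⊗[k] H) : flip23 k H (leg13 k H z) = leg12 k H z := by
  induction z using TensorProduct.induction_on with
  | zero => simp
  | tmul a b => simp [flip23, leg12, leg13, swapT]
  | add x y hx hy => simp [map_add, hx, hy]

lemma flip23_idComul (Q : QT k H) (z : H ⊗[k] H) :
    flip23 k H (idComul k H z) = leg23 k H Q.R * idComul k H z * leg23 k H Q.Rinv := by
  induction z using TensorProduct.induction_on with
  | zero => simp
  | tmul a b =>
    have h : swapT k H (Coalgebra.comul (R := k) b) =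
        Q.R * Coalgebra.comul (R := k) b * Q.Rinv := by
      calc swapT k H (Coalgebra.comul (R := k) b)
          = swapT k H (Coalgebra.comul (R := k) b) * (Q.R * Q.Rinv) := by
            rw [Q.mul_inv, mul_one]
        _ = Q.R * Coalgebra.comul (R := k) b * Q.Rinv := by
            rw [← mul_assoc, Q.quasi_cocomm b]
    simp [flip23, idComul, leg23, h, Algebra.TensorProduct.tmul_mul_tmul]
  | add x y hx hy => simp only [map_add, hx, hy, mul_add, add_mul]

lemma assoc_tmul_eq (w : H ⊗[k] H) (y : H) :
    (Algebra.TensorProduct.assoc k k k H H H) (w ⊗ₜ[k] y) =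
      leg12 k H w * ((1 : H) ⊗ₜ[k] ((1 : H) ⊗ₜ[k] y)) := by
  induction w using TensorProduct.induction_on with
  | zero => simp
  | tmul a b =>
    simp [leg12, Algebra.TensorProduct.assoc_tmul, Algebra.TensorProduct.tmul_mul_tmul]
  | add x y' hx hy => simp [TensorProduct.add_tmul, map_add, hx, hy, add_mul]

lemma leg12_comm_tail (v : H ⊗[k] H) (y : H) :
    leg12 k H v * ((1 : H) ⊗ₜ[k] ((1 : H) ⊗ₜ[k] y)) =
      ((1 : H) ⊗ₜ[k] ((1 : H) ⊗ₜ[k] y)) * leg12 k H v := by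
  induction v using TensorProduct.induction_on with
  | zero => simp
  | tmul a b => simp [leg12, Algebra.TensorProduct.tmul_mul_tmul]
  | add x y' hx hy => simp [map_add, add_mul, mul_add, hx, hy]

lemma chi_comm_comulId (P : PreCartier k H) (z : H ⊗[k] H) :
    leg12 k H P.χ * comulId k H z = comulId k H z * leg12 k H P.χ := by
  induction z using TensorProduct.induction_on with
  | zero => simp
  | tmul a b =>
    have hc : comulId k H (a ⊗ₜ[k] b) =
        leg12 k H (Coalgebra.comul (R := k) a) * ((1 : H) ⊗ₜ[k] ((1 : H) ⊗ₜ[k] b)) := by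
      rw [← assoc_tmul_eq]
      simp [comulId]
    rw [hc, ← mul_assoc, ← map_mul, P.chi_comm a, map_mul, mul_assoc, leg12_comm_tail,
      ← mul_assoc]
  | add x y hx hy => simp only [map_add, mul_add, add_mul, hx, hy]

/-- for a pre-Cartier quasitriangular bialgebra,
`R₁₂⁻¹ χ₁₃ R₁₂ = R₂₃⁻¹ χ₁₃ R₂₃` in `H ⊗ H ⊗ H`. -/
theorem conjugate_chi13_eq (P : PreCartier k H) :
    leg12 k H P.Rinv * leg13 k H P.χ * leg12 k H P.R =
      leg23 k H P.Rinv * leg13 k H P.χ * leg23 k H P.R := by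
  have hb : leg23 k H P.R * leg23 k H P.Rinv = 1 := by
    rw [← map_mul, P.mul_inv, map_one]
  have hb' : leg23 k H P.Rinv * leg23 k H P.R = 1 := by
    rw [← map_mul, P.inv_mul, map_one]
  have hc : leg13 k H P.R * leg13 k H P.Rinv = 1 := by
    rw [← map_mul, P.mul_inv, map_one]
  have hc' : leg13 k H P.Rinv * leg13 k H P.R = 1 := by
    rw [← map_mul, P.inv_mul, map_one]
  -- χ₁₂ commutes with (Δ⊗Id)(R) = R₁₃ R₂₃
  have h1 : leg12 k H P.χ * (leg13 k H P.R * leg23 k H P.R) =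
      (leg13 k H P.R * leg23 k H P.R) * leg12 k H P.χ := by
    rw [← P.hex2]
    exact chi_comm_comulId k H P P.R
  -- hence R₂₃ χ₁₂ R₂₃⁻¹ = R₁₃⁻¹ χ₁₂ R₁₃
  have h2 : leg23 k H P.R * leg12 k H P.χ * leg23 k H P.Rinv =
      leg13 k H P.Rinv * leg12 k H P.χ * leg13 k H P.R := by
    calc leg23 k H P.R * leg12 k H P.χ * leg23 k H P.Rinv
        = (leg13 k H P.Rinv * leg13 k H P.R) *
            (leg23 k H P.R * leg12 k H P.χ * leg23 k H P.Rinv) := by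
          rw [hc', one_mul]
      _ = leg13 k H P.Rinv *
            ((leg13 k H P.R * leg23 k H P.R) * leg12 k H P.χ) * leg23 k H P.Rinv := by
          noncomm_ring
      _ = leg13 k H P.Rinv *
            (leg12 k H P.χ * (leg13 k H P.R * leg23 k H P.R)) * leg23 k H P.Rinv := by
          rw [h1]
      _ = (leg13 k H P.Rinv * leg12 k H P.χ * leg13 k H P.R) *
            (leg23 k H P.R * leg23 k H P.Rinv) := by noncomm_ring
      _ = leg13 k H P.Rinv * leg12 k H P.χ * leg13 k H P.R := by rw [hb, mul_one]
  -- apply the flip of legs 2,3 to chi_hex1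
  have h3 := congrArg (flip23 k H) P.chi_hex1
  rw [flip23_idComul k H P.toQT] at h3
  simp only [map_add, map_mul, flip23_leg12, flip23_leg13] at h3
  rw [P.chi_hex1, mul_add, add_mul, h2] at h3
  -- cancel the common summand
  have h5 : leg23 k H P.R * (leg12 k H P.Rinv * leg13 k H P.χ * leg12 k H P.R) *
      leg23 k H P.Rinv = leg13 k H P.χ := by
    rw [add_comm (leg13 k H P.χ)] at h3
    have h4 : leg13 k H P.Rinv * leg12 k H P.χ * leg13 k H P.R +
        leg23 k H P.R * (leg12 k H P.Rinv * leg13 k H P.χ * leg12 k H P.R) *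
          leg23 k H P.Rinv =
        leg13 k H P.Rinv * leg12 k H P.χ * leg13 k H P.R + leg13 k H P.χ := by
      rw [← h3]
    exact add_left_cancel h4
  calc leg12 k H P.Rinv * leg13 k H P.χ * leg12 k H P.R
      = (leg23 k H P.Rinv * leg23 k H P.R) *
          (leg12 k H P.Rinv * leg13 k H P.χ * leg12 k H P.R) *
          (leg23 k H P.Rinv * leg23 k H P.R) := by rw [hb', one_mul, mul_one]
    _ = leg23 k H P.Rinv *
          (leg23 k H P.R * (leg12 k H P.Rinv * leg13 k H P.χ * leg12 k H P.R) *
            leg23 k H P.Rinv) * leg23 k H P.R := by noncomm_ring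
    _ = leg23 k H P.Rinv * leg13 k H P.χ * leg23 k H P.R := by rw [h5]

end
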